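/- Let (𝒳, ≥_*, π) be a market with π ∈ Π₀(𝒳) and let π^a be the cash additive part of π. Then M₀(π) = M₀(π^a). -/

import Mathlib

open Set Filter

/-- A reflexive and transitive binary relation `≥_*` on real valued functions on `Ω`
satisfying the rationality axioms (i)-(iii) of the paper. -/
structure Rationality (Ω : Type*) where
  ge : (Ω → ℝ) → (Ω → ℝ) → Prop
  refl : ∀ f, ge f f
  trans : ∀ f g h, ge f g → ge g h → ge f h
  /-- axiom (i), first part : `1 >_* 0`. -/
  one_gt_zero : ge 1 0 ∧ ¬ ge 0 1
  /-- axiom (i), second part : pointwise domination implies `≥_*`. -/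
  ge_of_le : ∀ f g : Ω → ℝ, (∀ ω, g ω ≤ f ω) → ge f g
  /-- axiom (ii) : `f ≥_* g` implies `b f + h ≥_* b g + h` for bounded `b ≥ 0`. -/
  affine : ∀ f g b h : Ω → ℝ, ge f g → (∀ ω, 0 ≤ b ω) → (∃ c : ℝ, ∀ ω, b ω ≤ c) →
    ge (fun ω => b ω * f ω + h ω) (fun ω => b ω * g ω + h ω)
  /-- axiom (iii) : `f >_* 0` implies `f ∧ 1 >_* 0`. -/
  trunc : ∀ f : Ω → ℝ, ge f 0 → ¬ ge 0 f →
    ge (fun ω => min (f ω) 1) 0 ∧ ¬ ge 0 (fun ω => min (f ω) 1)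

/-- The asymmetric (strict) part `>_*` of `≥_*`. -/
def Rationality.gt {Ω : Type*} (R : Rationality Ω) (f g : Ω → ℝ) : Prop :=
  R.ge f g ∧ ¬ R.ge g f

/-- A set `A ⊆ Ω` is negligible when `0 ≥_* 1_A`. -/
def Rationality.Negligible {Ω : Type*} (R : Rationality Ω) (A : Set Ω) : Prop :=
  R.ge 0 (A.indicator fun _ => (1 : ℝ))

/-- `𝒳` is a market : a convex set of functions containing `0` and `1`, whose elements are
`≥_*`-bounded below by constants and which is stable under addition of nonnegative constants. -/
structure IsMarket {Ω : Type*} (R : Rationality Ω) (X : Set (Ω → ℝ)) : Prop where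
  convex : ∀ f ∈ X, ∀ g ∈ X, ∀ t : ℝ, 0 ≤ t → t ≤ 1 →
    (fun ω => t * f ω + (1 - t) * g ω) ∈ X
  zero_mem : (0 : Ω → ℝ) ∈ X
  one_mem : (1 : Ω → ℝ) ∈ X
  bddBelow : ∀ f ∈ X, ∃ a : ℝ, R.ge f (fun _ => a)
  add_nonneg_const : ∀ f ∈ X, ∀ lam : ℝ, 0 ≤ lam → (fun ω => f ω + lam) ∈ X

/-- `π ∈ Π₀(𝒳)` : positively homogeneous, subadditive, normalized and `≥_*`-monotone on `X`. -/
structure IsPriceFun0 {Ω : Type*} (R : Rationality Ω) (X : Set (Ω → ℝ))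
    (π : (Ω → ℝ) → ℝ) : Prop where
  posHom : ∀ f ∈ X, ∀ lam : ℝ, 0 < lam → (fun ω => lam * f ω) ∈ X →
    π (fun ω => lam * f ω) = lam * π f
  subadd : ∀ f ∈ X, ∀ g ∈ X, (fun ω => f ω + g ω) ∈ X →
    π (fun ω => f ω + g ω) ≤ π f + π g
  norm_one : π 1 = 1
  mono : ∀ f ∈ X, ∀ g ∈ X, R.ge f g → π g ≤ π f

/-- `π ∈ Π(𝒳)` : a price function, i.e. an element of `Π₀(𝒳)` free of arbitrage. -/
structure IsPriceFun {Ω : Type*} (R : Rationality Ω) (X : Set (Ω → ℝ))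
    (π : (Ω → ℝ) → ℝ) extends IsPriceFun0 R X π : Prop where
  arbFree : ∀ f ∈ X, R.gt f 0 → 0 < π f

/-- Cash additivity of a price `π` on the set `X`. -/
def CashAdditive {Ω : Type*} (X : Set (Ω → ℝ)) (π : (Ω → ℝ) → ℝ) : Prop :=
  ∀ f ∈ X, ∀ a : ℝ, (fun ω => f ω + a) ∈ X → π (fun ω => f ω + a) = π f + a

/-- The cash additive part `π^a` of `π` : `π^a(f) = inf {π(f + t) - t : t ∈ ℝ, f + t ∈ X}`. -/
noncomputable def cashPart {Ω : Type*} (X : Set (Ω → ℝ)) (π : (Ω → ℝ) → ℝ)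
    (f : Ω → ℝ) : ℝ :=
  sInf {y | ∃ t : ℝ, (fun ω => f ω + t) ∈ X ∧ y = π (fun ω => f ω + t) - t}

/-- `L(𝒳)` : the superhedgeable claims `{g : λ X ≥_* |g| for some λ > 0, X ∈ 𝒳}`. -/
def Lspan {Ω : Type*} (R : Rationality Ω) (X : Set (Ω → ℝ)) : Set (Ω → ℝ) :=
  {g | ∃ lam : ℝ, 0 < lam ∧ ∃ f ∈ X, R.ge (fun ω => lam * f ω) (fun ω => |g ω|)}

/-- `𝒞(π) = {g : λ[X - π(X)] ≥_* g for some λ > 0, X ∈ 𝒳}`. -/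
def Cpi {Ω : Type*} (R : Rationality Ω) (X : Set (Ω → ℝ)) (π : (Ω → ℝ) → ℝ) :
    Set (Ω → ℝ) :=
  {g | ∃ lam : ℝ, 0 < lam ∧ ∃ f ∈ X, R.ge (fun ω => lam * (f ω - π f)) g}

/-- Closure in the topology of uniform distance on `𝔉(Ω)`. -/
def uClosure {Ω : Type*} (A : Set (Ω → ℝ)) : Set (Ω → ℝ) :=
  {g | ∀ ε : ℝ, 0 < ε → ∃ h ∈ A, ∀ ω, |g ω - h ω| ≤ ε}

/-- A finitely additive probability defined on the power set of `Ω`. -/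
structure FinAddProb (Ω : Type*) where
  meas : Set Ω → ℝ
  nonneg : ∀ A, 0 ≤ meas A
  total : meas Set.univ = 1
  additive : ∀ A B, Disjoint A B → meas (A ∪ B) = meas A + meas B

/-- Countable additivity of a finitely additive probability. -/
def FinAddProb.CountablyAdditive {Ω : Type*} (m : FinAddProb Ω) : Prop :=
  ∀ A : ℕ → Set Ω, (Pairwise fun i j => Disjoint (A i) (A j)) →
    HasSum (fun n => m.meas (A n)) (m.meas (⋃ n, A n))

/-- Upper tail `∫_0^∞ m(f > t) dt` (with values in `ℝ≥0∞`), used to define the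
finitely additive integral. -/
noncomputable def posTail {Ω : Type*} (m : FinAddProb Ω) (f : Ω → ℝ) : ENNReal :=
  ∫⁻ t in Set.Ioi (0 : ℝ), ENNReal.ofReal (m.meas {ω | t < f ω})

/-- `f ∈ L¹(m)` : both tail integrals are finite. -/
def MemL1 {Ω : Type*} (m : FinAddProb Ω) (f : Ω → ℝ) : Prop :=
  posTail m f ≠ ⊤ ∧ posTail m (fun ω => - f ω) ≠ ⊤

/-- The integral `∫ f dm` with respect to a finitely additive probability. -/
noncomputable def faIntegral {Ω : Type*} (m : FinAddProb Ω) (f : Ω → ℝ) : ℝ :=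
  (posTail m f).toReal - (posTail m (fun ω => - f ω)).toReal

/-- Closure of `A` with respect to the `L¹(m)` distance. -/
def L1Closure {Ω : Type*} (m : FinAddProb Ω) (A : Set (Ω → ℝ)) : Set (Ω → ℝ) :=
  {g | ∀ ε : ℝ, 0 < ε → ∃ h ∈ A, MemL1 m (fun ω => g ω - h ω) ∧
    faIntegral m (fun ω => |g ω - h ω|) ≤ ε}

/-- The set `M₀(π)` of pricing measures. -/
def M0 {Ω : Type*} (R : Rationality Ω) (X : Set (Ω → ℝ)) (π : (Ω → ℝ) → ℝ) :
    Set (FinAddProb Ω) :=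
  {m | (∀ g ∈ Lspan R X, MemL1 m g) ∧ ∀ f ∈ X, faIntegral m f ≤ π f}

/-- The set `M(π)` of strictly positive pricing measures :
those `m ∈ M₀(π)` with `∫ (f ∧ 1) dm > 0` whenever `f >_* 0`. -/
def Mstrict {Ω : Type*} (R : Rationality Ω) (X : Set (Ω → ℝ)) (π : (Ω → ℝ) → ℝ) :
    Set (FinAddProb Ω) :=
  {m | m ∈ M0 R X π ∧ ∀ f : Ω → ℝ, R.gt f 0 → 0 < faIntegral m (fun ω => min (f ω) 1)}

/-- The set `M(π; Y)` : elements of `M₀(π)` with `∫ (f ∧ 1) dm > 0` for `f ∈ Y`, `f >_* 0`. -/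
def MstrictOn {Ω : Type*} (R : Rationality Ω) (X : Set (Ω → ℝ)) (π : (Ω → ℝ) → ℝ)
    (Y : Set (Ω → ℝ)) : Set (FinAddProb Ω) :=
  {m | m ∈ M0 R X π ∧ ∀ f ∈ Y, R.gt f 0 → 0 < faIntegral m (fun ω => min (f ω) 1)}

/-- `𝒳₁ = {X ∧ k : X ∈ 𝒳, k ∈ ℝ₊ ∪ {+∞}}` (`k = +∞` yielding `X` itself). -/
def X1 {Ω : Type*} (X : Set (Ω → ℝ)) : Set (Ω → ℝ) :=
  {g | ∃ f ∈ X, g = f ∨ ∃ k : ℝ, 0 ≤ k ∧ g = fun ω => min (f ω) k}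

/-- The market power `𝓂(ρ)` : the supremum of
`[Σ ρ(fᵢ) - ρ(Σ fᵢ)] / Σ ρ(fᵢ)` over finite families of nonnegative bounded functions
(with the convention `0/0 = 0`, automatic in Lean). -/
noncomputable def marketPower {Ω : Type*} (ρ : (Ω → ℝ) → ℝ) : ℝ :=
  sSup {r | ∃ (N : ℕ) (f : Fin N → Ω → ℝ),
    (∀ i, ∀ ω, 0 ≤ f i ω) ∧ (∀ i, ∃ c : ℝ, ∀ ω, f i ω ≤ c) ∧
    r = ((∑ i, ρ (f i)) - ρ (fun ω => ∑ i, f i ω)) / (∑ i, ρ (f i))}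

/-- The relative market power `𝓂(ρ; Y)`, the supremum being restricted to finite families
of nonnegative bounded functions belonging to `Y`. -/
noncomputable def marketPowerOn {Ω : Type*} (Y : Set (Ω → ℝ)) (ρ : (Ω → ℝ) → ℝ) : ℝ :=
  sSup {r | ∃ (N : ℕ) (f : Fin N → Ω → ℝ), (∀ i, f i ∈ Y) ∧
    (∀ i, ∀ ω, 0 ≤ f i ω) ∧ (∀ i, ∃ c : ℝ, ∀ ω, f i ω ≤ c) ∧
    r = ((∑ i, ρ (f i)) - ρ (fun ω => ∑ i, f i ω)) / (∑ i, ρ (f i))}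

/-- A sequence of nonnegative bounded functions whose sum is bounded. -/
def GoodSeq {Ω : Type*} (f : ℕ → Ω → ℝ) : Prop :=
  (∀ n, ∀ ω, 0 ≤ f n ω) ∧ (∀ n, ∃ c : ℝ, ∀ ω, f n ω ≤ c) ∧
  (∃ c : ℝ, ∀ ω, ∀ k : ℕ, (∑ n ∈ Finset.range k, f n ω) ≤ c)

/-- The pointwise sum `Σₙ fₙ`. -/
noncomputable def seqSum {Ω : Type*} (f : ℕ → Ω → ℝ) : Ω → ℝ :=
  fun ω => ∑' n, f n ω

/-- The ratio `[Σ_{n ≤ k} ρ(fₙ) - ρ(Σₙ fₙ)] / Σ_{n ≤ k} ρ(fₙ)`. -/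
noncomputable def mcRatioSeq {Ω : Type*} (ρ : (Ω → ℝ) → ℝ) (f : ℕ → Ω → ℝ) (k : ℕ) : ℝ :=
  ((∑ n ∈ Finset.range (k + 1), ρ (f n)) - ρ (seqSum f)) /
    (∑ n ∈ Finset.range (k + 1), ρ (f n))

/-- `𝓂_c(ρ; f₁, f₂, …)` : the limit as `k → ∞` of the above ratios (as an extended real,
computed as a `limsup`, which coincides with the limit whenever the latter exists). -/
noncomputable def mcVal {Ω : Type*} (ρ : (Ω → ℝ) → ℝ) (f : ℕ → Ω → ℝ) : EReal :=
  Filter.limsup (fun k => ((mcRatioSeq ρ f k : ℝ) : EReal)) Filter.atTop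

/-- `𝓂_c(ρ)` : the supremum of `𝓂_c(ρ; f₁, f₂, …)` over all admissible sequences. -/
noncomputable def mcSup {Ω : Type*} (ρ : (Ω → ℝ) → ℝ) : EReal :=
  sSup {v | ∃ f : ℕ → Ω → ℝ, GoodSeq f ∧ v = mcVal ρ f}

/-- `𝓃_c(ρ)` : minus the infimum of `𝓂_c(ρ; f₁, f₂, …)` over all admissible sequences. -/
noncomputable def ncVal {Ω : Type*} (ρ : (Ω → ℝ) → ℝ) : EReal :=
  - sInf {v | ∃ f : ℕ → Ω → ℝ, GoodSeq f ∧ v = mcVal ρ f}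

/-- The set `B(Ω)` of bounded functions. -/
def BddFun (Ω : Type*) : Set (Ω → ℝ) :=
  {f | ∃ c : ℝ, ∀ ω, |f ω| ≤ c}

/-- `P` represents `≥_*` : `f ≥_* h` iff `inf_{ε > 0} P(f > h - ε) = 1`. -/
def Represents {Ω : Type*} (P : FinAddProb Ω) (R : Rationality Ω) : Prop :=
  ∀ f h : Ω → ℝ,
    R.ge f h ↔ sInf {x | ∃ ε : ℝ, 0 < ε ∧ x = P.meas {ω | h ω - ε < f ω}} = 1

/-- The robustness property (4d) : `f + ε >_* 0` for all `ε > 0` implies `f ≥_* 0`. -/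
def Robust {Ω : Type*} (R : Rationality Ω) : Prop :=
  ∀ f : Ω → ℝ, (∀ ε : ℝ, 0 < ε → R.gt (fun ω => f ω + ε) 0) → R.ge f 0

section Aux

open MeasureTheory ENNReal

variable {Ω : Type*}

namespace FinAddProb

variable (m : FinAddProb Ω)

lemma meas_mono {A B : Set Ω} (h : A ⊆ B) : m.meas A ≤ m.meas B := by
  have hU : A ∪ (B \ A) = B := Set.union_diff_cancel h
  have hD : Disjoint A (B \ A) := Set.disjoint_sdiff_right
  calc m.meas A ≤ m.meas A + m.meas (B \ A) := le_add_of_nonneg_right (m.nonneg _)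
    _ = m.meas (A ∪ (B \ A)) := (m.additive _ _ hD).symm
    _ = m.meas B := by rw [hU]

lemma meas_le_one (A : Set Ω) : m.meas A ≤ 1 :=
  (m.meas_mono (Set.subset_univ A)).trans_eq m.total

lemma meas_add_compl (A : Set Ω) : m.meas A + m.meas Aᶜ = 1 := by
  rw [← m.additive A Aᶜ disjoint_compl_right, Set.union_compl_self, m.total]

/-- The upper tail function `u ↦ m(f > u)` as an `ℝ≥0∞`-valued function. -/
noncomputable def tfn (f : Ω → ℝ) (u : ℝ) : ENNReal :=
  ENNReal.ofReal (m.meas {ω | u < f ω})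

lemma tfn_antitone (f : Ω → ℝ) : Antitone (m.tfn f) := fun u v huv =>
  ENNReal.ofReal_le_ofReal (m.meas_mono fun ω hω => lt_of_le_of_lt huv hω)

lemma tfn_measurable (f : Ω → ℝ) : Measurable (m.tfn f) :=
  (m.tfn_antitone f).measurable

lemma tfn_le_one (f : Ω → ℝ) (u : ℝ) : m.tfn f u ≤ 1 := by
  unfold tfn
  rw [← ENNReal.ofReal_one]
  exact ENNReal.ofReal_le_ofReal (m.meas_le_one _)

lemma posTail_eq (f : Ω → ℝ) : posTail m f = ∫⁻ u in Set.Ioi (0 : ℝ), m.tfn f u := rfl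

lemma setLIntegral_tfn_le (f : Ω → ℝ) {s : Set ℝ} :
    ∫⁻ u in s, m.tfn f u ≤ volume s := by
  calc ∫⁻ u in s, m.tfn f u ≤ ∫⁻ _ in s, 1 :=
        lintegral_mono fun u => m.tfn_le_one f u
    _ = volume s := setLIntegral_one s

end FinAddProb

/-- Shifting the variable in a Lebesgue integral over `Ioi`. -/
lemma lint_Ioi_shift (g : ℝ → ℝ≥0∞) (c t : ℝ) :
    ∫⁻ s in Set.Ioi c, g (s + t) = ∫⁻ s in Set.Ioi (c + t), g s := by
  rw [← lintegral_indicator measurableSet_Ioi, ← lintegral_indicator measurableSet_Ioi]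
  have h : ∀ s : ℝ, (Set.Ioi c).indicator (fun s => g (s + t)) s
      = (Set.Ioi (c + t)).indicator g (s + t) := by
    intro s
    by_cases hs : s ∈ Set.Ioi c
    · rw [Set.indicator_of_mem hs, Set.indicator_of_mem (by simpa using hs)]
    · rw [Set.indicator_of_notMem hs, Set.indicator_of_notMem (by simpa using hs)]
  simp_rw [h]
  exact lintegral_add_right_eq_self ((Set.Ioi (c + t)).indicator g) t

/-- Shifting the variable in a Lebesgue integral over `Ioc`. -/
lemma lint_Ioc_shift (g : ℝ → ℝ≥0∞) (a b t : ℝ) :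
    ∫⁻ s in Set.Ioc a b, g (s + t) = ∫⁻ s in Set.Ioc (a + t) (b + t), g s := by
  rw [← lintegral_indicator measurableSet_Ioc, ← lintegral_indicator measurableSet_Ioc]
  have h : ∀ s : ℝ, (Set.Ioc a b).indicator (fun s => g (s + t)) s
      = (Set.Ioc (a + t) (b + t)).indicator g (s + t) := by
    intro s
    by_cases hs : s ∈ Set.Ioc a b
    · rw [Set.indicator_of_mem hs, Set.indicator_of_mem]
      obtain ⟨h1, h2⟩ := hs
      exact ⟨by linarith, by linarith⟩
    · rw [Set.indicator_of_notMem hs, Set.indicator_of_notMem]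
      intro ⟨h1, h2⟩
      exact hs ⟨by linarith, by linarith⟩
  simp_rw [h]
  exact lintegral_add_right_eq_self ((Set.Ioc (a + t) (b + t)).indicator g) t

/-- Reflecting the variable in a Lebesgue integral : `∫_{Ioc 0 t} g(-u) du = ∫_{Ioc (-t) 0} g`. -/
lemma lint_Ioc_reflect (g : ℝ → ℝ≥0∞) (hg : Measurable g) (t : ℝ) :
    ∫⁻ u in Set.Ioc 0 t, g (-u) = ∫⁻ u in Set.Ioc (-t) 0, g u := by
  have hmp : MeasurePreserving (fun x : ℝ => -x) volume volume :=
    Measure.measurePreserving_neg volume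
  have key : ∫⁻ u, (Set.Ico (-t) 0).indicator g (-u) = ∫⁻ u, (Set.Ico (-t) 0).indicator g u :=
    hmp.lintegral_comp (hg.indicator measurableSet_Ico)
  have h1 : ∀ u : ℝ, (Set.Ico (-t) 0).indicator g (-u)
      = (Set.Ioc 0 t).indicator (fun u => g (-u)) u := by
    intro u
    by_cases hu : u ∈ Set.Ioc 0 t
    · rw [Set.indicator_of_mem hu, Set.indicator_of_mem]
      obtain ⟨h1, h2⟩ := hu
      exact ⟨by linarith, by linarith⟩
    · rw [Set.indicator_of_notMem hu, Set.indicator_of_notMem]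
      intro ⟨h1, h2⟩
      exact hu ⟨by linarith, by linarith⟩
  calc ∫⁻ u in Set.Ioc 0 t, g (-u)
      = ∫⁻ u, (Set.Ioc 0 t).indicator (fun u => g (-u)) u :=
        (lintegral_indicator measurableSet_Ioc _).symm
    _ = ∫⁻ u, (Set.Ico (-t) 0).indicator g (-u) := by simp_rw [h1]
    _ = ∫⁻ u, (Set.Ico (-t) 0).indicator g u := key
    _ = ∫⁻ u in Set.Ico (-t) 0, g u := lintegral_indicator measurableSet_Ico g
    _ = ∫⁻ u in Set.Ioc (-t) 0, g u := by
        rw [restrict_Ico_eq_restrict_Ioc]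

namespace FinAddProb

variable (m : FinAddProb Ω)

lemma posTail_add_const (f : Ω → ℝ) {t : ℝ} (ht : 0 ≤ t) :
    posTail m (fun ω => f ω + t)
      = posTail m f + ∫⁻ u in Set.Ioc (-t) 0, m.tfn f u := by
  have h0 : posTail m (fun ω => f ω + t) = ∫⁻ s in Set.Ioi (0 : ℝ), m.tfn f (s + -t) := by
    unfold posTail FinAddProb.tfn
    refine setLIntegral_congr_fun measurableSet_Ioi (fun s _ => ?_)
    congr 2
    ext ω
    constructor <;> intro h <;> simp only [Set.mem_setOf_eq] at * <;> linarith
  rw [h0, lint_Ioi_shift (m.tfn f) 0 (-t), zero_add]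
  have hsplit : Set.Ioc (-t) 0 ∪ Set.Ioi (0 : ℝ) = Set.Ioi (-t) :=
    Set.Ioc_union_Ioi_eq_Ioi (by linarith)
  rw [← hsplit, lintegral_union measurableSet_Ioi Set.Ioc_disjoint_Ioi_same,
    m.posTail_eq, add_comm]

lemma posTail_neg_add_const (f : Ω → ℝ) {t : ℝ} (ht : 0 ≤ t) :
    posTail m (fun ω => -(f ω + t)) + ∫⁻ u in Set.Ioc 0 t, m.tfn (fun ω => -f ω) u
      = posTail m (fun ω => -f ω) := by
  have h0 : posTail m (fun ω => -(f ω + t))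
      = ∫⁻ s in Set.Ioi (0 : ℝ), m.tfn (fun ω => -f ω) (s + t) := by
    unfold posTail FinAddProb.tfn
    refine setLIntegral_congr_fun measurableSet_Ioi (fun s _ => ?_)
    congr 2
    ext ω
    constructor <;> intro h <;> simp only [Set.mem_setOf_eq] at * <;> linarith
  rw [h0, lint_Ioi_shift _ 0 t, zero_add]
  have hsplit : Set.Ioc 0 t ∪ Set.Ioi t = Set.Ioi (0 : ℝ) :=
    Set.Ioc_union_Ioi_eq_Ioi ht
  rw [m.posTail_eq (fun ω => -f ω), ← hsplit,
    lintegral_union measurableSet_Ioi Set.Ioc_disjoint_Ioi_same, add_comm]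

lemma tail_sum_eq (f : Ω → ℝ) {t : ℝ} (ht : 0 ≤ t) :
    (∫⁻ u in Set.Ioc (-t) 0, m.tfn f u)
      + ∫⁻ u in Set.Ioc 0 t, m.tfn (fun ω => -f ω) u = ENNReal.ofReal t := by
  set A := ∫⁻ u in Set.Ioc (-t) 0, m.tfn f u with hA
  set B := ∫⁻ u in Set.Ioc 0 t, m.tfn (fun ω => -f ω) u with hB
  have hAle : A ≤ ENNReal.ofReal t := by
    refine (m.setLIntegral_tfn_le f).trans ?_
    rw [Real.volume_Ioc]; simp
  have hBle : B ≤ ENNReal.ofReal t := by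
    refine (m.setLIntegral_tfn_le _).trans ?_
    rw [Real.volume_Ioc]; simp
  -- upper bound : A + B ≤ t
  have hle : A + B ≤ ENNReal.ofReal t := by
    have hrefl : B = ∫⁻ u in Set.Ioc (-t) 0, m.tfn (fun ω => -f ω) (-u) := by
      have h0 := lint_Ioc_reflect (fun u => m.tfn (fun ω => -f ω) (-u))
        ((m.tfn_measurable _).comp measurable_neg) t
      simp only [neg_neg] at h0
      rw [hB, ← h0]
    have hsum : A + B
        = ∫⁻ u in Set.Ioc (-t) 0, (m.tfn f u + m.tfn (fun ω => -f ω) (-u)) := by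
      rw [hA, hrefl, ← lintegral_add_left (m.tfn_measurable f)]
    rw [hsum]
    have hpt : ∀ u : ℝ, m.tfn f u + m.tfn (fun ω => -f ω) (-u) ≤ 1 := by
      intro u
      unfold FinAddProb.tfn
      rw [← ENNReal.ofReal_add (m.nonneg _) (m.nonneg _), ← ENNReal.ofReal_one]
      apply ENNReal.ofReal_le_ofReal
      have hdisj : Disjoint {ω | u < f ω} {ω | -u < -f ω} := by
        rw [Set.disjoint_left]
        intro ω h1 h2
        simp only [Set.mem_setOf_eq] at h1 h2
        linarith
      calc m.meas {ω | u < f ω} + m.meas {ω | -u < -f ω}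
          = m.meas ({ω | u < f ω} ∪ {ω | -u < -f ω}) := (m.additive _ _ hdisj).symm
        _ ≤ 1 := m.meas_le_one _
    calc ∫⁻ u in Set.Ioc (-t) 0, (m.tfn f u + m.tfn (fun ω => -f ω) (-u))
        ≤ ∫⁻ _ in Set.Ioc (-t) 0, 1 := lintegral_mono fun u => hpt u
      _ = volume (Set.Ioc (-t) (0:ℝ)) := setLIntegral_one _
      _ = ENNReal.ofReal t := by rw [Real.volume_Ioc]; simp
  -- lower bound : t ≤ A + B (+ ε)
  have hge : ENNReal.ofReal t ≤ A + B := by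
    refine ENNReal.le_of_forall_pos_le_add fun ε hε hfin => ?_
    have hεpos : (0:ℝ) < (ε:ℝ) := hε
    -- C = ∫_{Ioc 0 t} tfn f (-u - ε)
    have hpt : ∀ u : ℝ, (1:ℝ≥0∞) ≤ m.tfn (fun ω => -f ω) u + m.tfn f (-u - ε) := by
      intro u
      unfold FinAddProb.tfn
      rw [← ENNReal.ofReal_add (m.nonneg _) (m.nonneg _), ← ENNReal.ofReal_one]
      apply ENNReal.ofReal_le_ofReal
      have hsub : {ω | -u - (ε:ℝ) < f ω}ᶜ ⊆ {ω | u < -f ω} := by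
        intro ω hω
        simp only [Set.mem_compl_iff, Set.mem_setOf_eq, not_lt] at hω ⊢
        linarith
      have := m.meas_add_compl {ω | -u - (ε:ℝ) < f ω}
      have := m.meas_mono hsub
      linarith
    have hC : ∫⁻ u in Set.Ioc 0 t, m.tfn f (-u - ε) ≤ A + ENNReal.ofReal ε := by
      have hrefl : ∫⁻ u in Set.Ioc 0 t, m.tfn f (-u - ε)
          = ∫⁻ u in Set.Ioc (-t) 0, m.tfn f (u - ε) := by
        have : ∀ u : ℝ, m.tfn f (-u - ε) = (fun v => m.tfn f (v - ε)) (-u) := by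
          intro u; rfl
        rw [← lint_Ioc_reflect (fun v => m.tfn f (v - ε))
          ((m.tfn_measurable f).comp (measurable_id.sub measurable_const)) t]
      have hshift : ∫⁻ u in Set.Ioc (-t) 0, m.tfn f (u - ε)
          = ∫⁻ u in Set.Ioc (-t - ε) (-ε), m.tfn f u := by
        have := lint_Ioc_shift (m.tfn f) (-t) 0 (-ε)
        simpa [sub_eq_add_neg] using this
      rw [hrefl, hshift]
      have hmono : ∫⁻ u in Set.Ioc (-t - ε) (-ε), m.tfn f u
          ≤ ∫⁻ u in Set.Ioc (-t - ε) 0, m.tfn f u :=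
        lintegral_mono_set (Set.Ioc_subset_Ioc le_rfl (by linarith))
      refine hmono.trans ?_
      have hsplit : Set.Ioc (-t - ε) (-t) ∪ Set.Ioc (-t) 0 = Set.Ioc (-t - ε) (0:ℝ) :=
        Set.Ioc_union_Ioc_eq_Ioc (by linarith) (by linarith)
      rw [← hsplit, lintegral_union measurableSet_Ioc (Set.Ioc_disjoint_Ioc_of_le le_rfl)]
      have h1 : ∫⁻ u in Set.Ioc (-t - ε) (-t), m.tfn f u ≤ ENNReal.ofReal ε := by
        refine (m.setLIntegral_tfn_le f).trans ?_
        rw [Real.volume_Ioc]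
        apply ENNReal.ofReal_le_ofReal; linarith
      calc (∫⁻ u in Set.Ioc (-t - ε) (-t), m.tfn f u) + ∫⁻ u in Set.Ioc (-t) 0, m.tfn f u
          ≤ ENNReal.ofReal ε + A := add_le_add h1 le_rfl
        _ = A + ENNReal.ofReal ε := add_comm _ _
    have hmain : ENNReal.ofReal t ≤ B + (A + ENNReal.ofReal ε) := by
      have h1 : ENNReal.ofReal t = ∫⁻ _ in Set.Ioc (0:ℝ) t, 1 := by
        rw [setLIntegral_one, Real.volume_Ioc]; simp
      rw [h1]
      have h2 : ∫⁻ u in Set.Ioc (0:ℝ) t, (1:ℝ≥0∞)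
          ≤ ∫⁻ u in Set.Ioc 0 t, (m.tfn (fun ω => -f ω) u + m.tfn f (-u - ε)) :=
        lintegral_mono fun u => hpt u
      refine h2.trans ?_
      rw [lintegral_add_left (m.tfn_measurable _)]
      exact add_le_add le_rfl hC
    calc ENNReal.ofReal t ≤ B + (A + ENNReal.ofReal ε) := hmain
      _ = A + B + ENNReal.ofReal ε := by ring
      _ = A + B + ε := by rw [ENNReal.ofReal_coe_nnreal]
  exact le_antisymm hle hge

lemma faIntegral_add_const (f : Ω → ℝ) {t : ℝ} (ht : 0 ≤ t)
    (hP : posTail m f ≠ ⊤) (hN : posTail m (fun ω => -f ω) ≠ ⊤) :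
    faIntegral m (fun ω => f ω + t) = faIntegral m f + t := by
  set A := ∫⁻ u in Set.Ioc (-t) 0, m.tfn f u with hA
  set B := ∫⁻ u in Set.Ioc 0 t, m.tfn (fun ω => -f ω) u with hB
  have hAB : A + B = ENNReal.ofReal t := m.tail_sum_eq f ht
  have hAfin : A ≠ ⊤ := by
    intro h; rw [h] at hAB; simp at hAB
  have hBfin : B ≠ ⊤ := by
    intro h; rw [h, add_top] at hAB; simp at hAB
  have h1 : posTail m (fun ω => f ω + t) = posTail m f + A := m.posTail_add_const f ht
  have h2 : posTail m (fun ω => -(f ω + t)) + B = posTail m (fun ω => -f ω) :=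
    m.posTail_neg_add_const f ht
  have hN' : posTail m (fun ω => -(f ω + t)) ≠ ⊤ := by
    intro h; rw [h, top_add] at h2; exact hN h2.symm
  have habt : A.toReal + B.toReal = t := by
    rw [← ENNReal.toReal_add hAfin hBfin, hAB, ENNReal.toReal_ofReal ht]
  have hfa : faIntegral m (fun ω => f ω + t)
      = (posTail m f + A).toReal - (posTail m (fun ω => -(f ω + t))).toReal := by
    unfold faIntegral
    rw [h1]
  have hNeq : (posTail m (fun ω => -f ω)).toReal
      = (posTail m (fun ω => -(f ω + t))).toReal + B.toReal := by
    rw [← ENNReal.toReal_add hN' hBfin, h2]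
  unfold faIntegral at *
  rw [hfa, ENNReal.toReal_add hP hAfin]
  linarith

end FinAddProb

end Aux

section MarketAux

variable {Ω : Type*} {R : Rationality Ω} {X : Set (Ω → ℝ)} {π : (Ω → ℝ) → ℝ}

lemma const_mem (hM : IsMarket R X) {c : ℝ} (hc : 0 ≤ c) : (fun _ : Ω => c) ∈ X := by
  have := hM.add_nonneg_const 0 hM.zero_mem c hc
  simpa using this

lemma pi_zero (hM : IsMarket R X) (hπ : IsPriceFun0 R X π) : π (0 : Ω → ℝ) = 0 := by
  have hfun : (fun ω => (2:ℝ) * (0 : Ω → ℝ) ω) = (0 : Ω → ℝ) := by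
    funext ω; simp
  have := hπ.posHom 0 hM.zero_mem 2 (by norm_num) (by rw [hfun]; exact hM.zero_mem)
  rw [hfun] at this
  linarith

lemma pi_const (hM : IsMarket R X) (hπ : IsPriceFun0 R X π) {c : ℝ} (hc : 0 ≤ c) :
    π (fun _ : Ω => c) = c := by
  rcases eq_or_lt_of_le hc with h | h
  · have : (fun _ : Ω => c) = (0 : Ω → ℝ) := by funext ω; simp [← h]
    rw [this, pi_zero hM hπ]; exact h
  · have hfun : (fun ω => c * (1 : Ω → ℝ) ω) = (fun _ : Ω => c) := by
      funext ω; simp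
    have := hπ.posHom 1 hM.one_mem c h (by rw [hfun]; exact const_mem hM hc)
    rw [hfun, hπ.norm_one, mul_one] at this
    exact this

lemma ge_add_const (R : Rationality Ω) {f g : Ω → ℝ} (h : R.ge f g) (t : ℝ) :
    R.ge (fun ω => f ω + t) (fun ω => g ω + t) := by
  have := R.affine f g (fun _ => 1) (fun _ => t) h (fun ω => by norm_num)
    ⟨1, fun ω => le_rfl⟩
  simpa using this

lemma mem_Lspan (hM : IsMarket R X) {f : Ω → ℝ} (hf : f ∈ X) : f ∈ Lspan R X := by
  obtain ⟨a, ha⟩ := hM.bddBelow f hf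
  set c : ℝ := max 0 (-(2*a)) with hc
  have hc0 : 0 ≤ c := le_max_left _ _
  have hc2 : 0 ≤ 2*a + c := by
    have := le_max_right 0 (-(2*a)); linarith
  refine ⟨1, one_pos, fun ω => f ω + c, hM.add_nonneg_const f hf c hc0, ?_⟩
  set b : Ω → ℝ := fun ω => if f ω < 0 then 2 else 0 with hb
  set h : Ω → ℝ := fun ω => f ω + c - b ω * f ω with hh
  have step := R.affine f (fun _ => a) b h ha
    (fun ω => by by_cases hω : f ω < 0 <;> simp [hb, hω])
    ⟨2, fun ω => by by_cases hω : f ω < 0 <;> simp [hb, hω]⟩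
  have e1 : (fun ω => b ω * f ω + h ω) = (fun ω => (1:ℝ) * (f ω + c)) := by
    funext ω; simp only [hh]; ring
  rw [e1] at step
  refine R.trans _ _ _ step (R.ge_of_le _ _ fun ω => ?_)
  by_cases hω : f ω < 0
  · have hb2 : b ω = 2 := by simp [hb, hω]
    simp only [hh, hb2]
    rw [abs_of_neg hω]
    ring_nf
    nlinarith [hc2]
  · have hb0 : b ω = 0 := by simp [hb, hω]
    push_neg at hω
    simp only [hh, hb0]
    rw [abs_of_nonneg hω]
    linarith

/-- The defining set of `cashPart`. -/
def cashSet (X : Set (Ω → ℝ)) (π : (Ω → ℝ) → ℝ) (f : Ω → ℝ) : Set ℝ :=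
  {y | ∃ t : ℝ, (fun ω => f ω + t) ∈ X ∧ y = π (fun ω => f ω + t) - t}

lemma pi_mem_cashSet {f : Ω → ℝ} (hf : f ∈ X) : π f ∈ cashSet X π f := by
  refine ⟨0, ?_, ?_⟩ <;> simp [hf]

lemma cashSet_bddBelow (hM : IsMarket R X) (hπ : IsPriceFun0 R X π) {f : Ω → ℝ}
    (hf : f ∈ X) : BddBelow (cashSet X π f) := by
  obtain ⟨a, ha⟩ := hM.bddBelow f hf
  refine ⟨min a (π (fun ω => f ω - a) + a), fun y hy => ?_⟩
  obtain ⟨t, htX, rfl⟩ := hy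
  rcases le_or_gt (-a) t with hta | hta
  · -- a + t ≥ 0
    have hconst : (fun _ : Ω => a + t) ∈ X := const_mem hM (by linarith)
    have hge : R.ge (fun ω => f ω + t) (fun _ => a + t) := by
      have := ge_add_const R ha t
      simpa using this
    have := hπ.mono _ htX _ hconst hge
    rw [pi_const hM hπ (show (0:ℝ) ≤ a + t by linarith)] at this
    have : a ≤ π (fun ω => f ω + t) - t := by linarith
    exact le_trans (min_le_left _ _) this
  · -- t < -a
    set s : ℝ := -(a + t) with hs
    have hs0 : 0 ≤ s := by simp [hs]; linarith
    have hsum : (fun ω => (f ω + t) + s) = (fun ω => f ω - a) := by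
      funext ω; simp [hs]; ring
    have hfm : (fun ω => f ω - a) ∈ X := by
      rw [← hsum]; exact hM.add_nonneg_const _ htX s hs0
    have hsub := hπ.subadd _ htX (fun _ => s) (const_mem hM hs0) (by rw [hsum]; exact hfm)
    rw [hsum, pi_const hM hπ hs0] at hsub
    have : π (fun ω => f ω - a) + a ≤ π (fun ω => f ω + t) - t := by
      simp only [hs] at hsub ⊢; linarith
    exact le_trans (min_le_right _ _) this

lemma cashPart_le_pi (hM : IsMarket R X) (hπ : IsPriceFun0 R X π) {f : Ω → ℝ}
    (hf : f ∈ X) : cashPart X π f ≤ π f :=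
  csInf_le (cashSet_bddBelow hM hπ hf) (pi_mem_cashSet hf)

end MarketAux

/-- `M₀(π) = M₀(π^a)` where `π^a` is the cash additive part of `π`. -/
theorem M0_cashPart {Ω : Type*} (R : Rationality Ω) (X : Set (Ω → ℝ)) (π : (Ω → ℝ) → ℝ)
    (hM : IsMarket R X) (hπ : IsPriceFun0 R X π) :
    M0 R X π = M0 R X (cashPart X π) := by
  ext m
  simp only [M0, Set.mem_setOf_eq]
  constructor
  · rintro ⟨h1, h2⟩
    refine ⟨h1, fun f hf => ?_⟩
    -- faIntegral m f ≤ cashPart X π f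
    refine le_csInf ⟨π f, pi_mem_cashSet hf⟩ ?_
    rintro y ⟨t, htX, rfl⟩
    have hIft : faIntegral m (fun ω => f ω + t) ≤ π (fun ω => f ω + t) := h2 _ htX
    have key : faIntegral m (fun ω => f ω + t) = faIntegral m f + t := by
      rcases le_or_gt 0 t with ht | ht
      · obtain ⟨hP, hN⟩ := h1 f (mem_Lspan hM hf)
        exact m.faIntegral_add_const f ht hP hN
      · obtain ⟨hP, hN⟩ := h1 _ (mem_Lspan hM htX)
        have := m.faIntegral_add_const (fun ω => f ω + t) (t := -t) (by linarith) hP hN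
        have hfun : (fun ω => (f ω + t) + -t) = f := by funext ω; ring
        rw [hfun] at this
        linarith
    linarith
  · rintro ⟨h1, h2⟩
    exact ⟨h1, fun f hf => (h2 f hf).trans (cashPart_le_pi hM hπ hf)⟩
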